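/- If (r,p,q) is feasible for the exponential cone program EXP, then -Σ_{x,y,z} r_{x,y,z} ≥ Σ_{x,y,z} q_{x,y,z}·ln(q_{x,y,z}/p_{x,y,z}), with the summand interpreted as 0 when q_{x,y,z} = 0. Consequently the optimal values of EXP and the convex program CP coincide. -/

import Mathlib

open scoped BigOperators

/-- The exponential cone in ℝ³ (represented as ℝ × ℝ × ℝ). -/
def Kexp : Set (ℝ × ℝ × ℝ) :=
  {t | 0 < t.2.2 ∧ t.2.2 * Real.exp (t.1 / t.2.2) ≤ t.2.1} ∪
  {t | t.2.2 = 0 ∧ t.1 ≤ 0 ∧ 0 ≤ t.2.1}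

lemma kexp_bound {r p q : ℝ} (h : (r, p, q) ∈ Kexp) :
    (if q = 0 then 0 else q * Real.log (q / p)) ≤ -r ∧ 0 ≤ q := by
  rcases h with ⟨hq, hle⟩ | ⟨hq, hr, hp⟩
  · simp only at hq hle
    have hq' : q ≠ 0 := ne_of_gt hq
    rw [if_neg hq']
    constructor
    · have hp : 0 < p := lt_of_lt_of_le (by positivity) hle
      have := Real.log_le_log (by positivity) hle
      rw [Real.log_mul hq' (Real.exp_ne_zero _), Real.log_exp] at this
      have h2 : r / q ≤ Real.log p - Real.log q := by linarith
      have h3 : Real.log (q / p) = Real.log q - Real.log p :=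
        Real.log_div hq' (ne_of_gt hp)
      rw [h3]
      have := (div_le_iff₀ hq).mp h2
      nlinarith
    · exact le_of_lt hq
  · simp only at hq hr hp
    subst hq
    simp [hr, neg_nonneg.mpr hr]

lemma sInf_eq_of_subset {S T : Set ℝ} (hST : S ⊆ T) (h : ∀ v ∈ T, ∃ w ∈ S, w ≤ v) :
    sInf S = sInf T := by
  by_cases hS : S.Nonempty
  · have hT : T.Nonempty := ⟨hS.choose, hST hS.choose_spec⟩
    by_cases hB : BddBelow S
    · obtain ⟨m, hm⟩ := hB
      have hBT : BddBelow T := ⟨m, fun v hv => by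
        obtain ⟨w, hw, hwv⟩ := h v hv; exact le_trans (hm hw) hwv⟩
      apply le_antisymm
      · refine le_csInf hT fun v hv => ?_
        obtain ⟨w, hw, hwv⟩ := h v hv
        exact le_trans (csInf_le ⟨m, hm⟩ hw) hwv
      · exact csInf_le_csInf hBT hS hST
    · have hBT : ¬ BddBelow T := fun hBT => hB (hBT.mono hST)
      rw [Real.sInf_of_not_bddBelow hB, Real.sInf_of_not_bddBelow hBT]
  · have hT : ¬ T.Nonempty := fun ⟨v, hv⟩ => by
      obtain ⟨w, hw, _⟩ := h v hv; exact hS ⟨w, hw⟩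
    rw [Set.not_nonempty_iff_eq_empty] at hS hT
    rw [hS, hT]

/-- For EXP-feasible `(r,p,q)` the objective bounds the CP objective, and the
optimal values of EXP and CP coincide. -/
theorem exp_objective_dominates_and_values_coincide
    {X Y Z : Type*} [Fintype X] [Fintype Y] [Fintype Z]
    (bY : X × Y → ℝ) (bZ : X × Z → ℝ) :
    (∀ r p q : X × Y × Z → ℝ,
      (∀ x y, ∑ z, q (x, y, z) = bY (x, y)) →
      (∀ x z, ∑ y, q (x, y, z) = bZ (x, z)) →
      (∀ t : X × Y × Z, p t = ∑ x, q (x, t.2.1, t.2.2)) →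
      (∀ t : X × Y × Z, (r t, p t, q t) ∈ Kexp) →
      (∑ t : X × Y × Z, if q t = 0 then 0 else q t * Real.log (q t / p t))
        ≤ -∑ t : X × Y × Z, r t) ∧
    sInf {v : ℝ | ∃ r p q : X × Y × Z → ℝ,
        (∀ x y, ∑ z, q (x, y, z) = bY (x, y)) ∧
        (∀ x z, ∑ y, q (x, y, z) = bZ (x, z)) ∧
        (∀ t : X × Y × Z, p t = ∑ x, q (x, t.2.1, t.2.2)) ∧
        (∀ t : X × Y × Z, (r t, p t, q t) ∈ Kexp) ∧
        v = -∑ t : X × Y × Z, r t}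
      = sInf {v : ℝ | ∃ q : X × Y × Z → ℝ,
        (∀ t, 0 ≤ q t) ∧
        (∀ x y, ∑ z, q (x, y, z) = bY (x, y)) ∧
        (∀ x z, ∑ y, q (x, y, z) = bZ (x, z)) ∧
        v = ∑ t : X × Y × Z, if q t = 0 then 0
            else q t * Real.log (q t / ∑ x : X, q (x, t.2.1, t.2.2))} := by
  have dom : ∀ r p q : X × Y × Z → ℝ,
      (∀ t : X × Y × Z, (r t, p t, q t) ∈ Kexp) →
      (∑ t : X × Y × Z, if q t = 0 then 0 else q t * Real.log (q t / p t))
        ≤ -∑ t : X × Y × Z, r t := by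
    intro r p q hK
    rw [← Finset.sum_neg_distrib]
    exact Finset.sum_le_sum fun t _ => (kexp_bound (hK t)).1
  refine ⟨fun r p q _ _ _ hK => dom r p q hK, ?_⟩
  apply (sInf_eq_of_subset ?_ ?_).symm
  · -- CP set ⊆ EXP set
    rintro v ⟨q, hq0, hY, hZ, hv⟩
    set p : X × Y × Z → ℝ := fun t => ∑ x, q (x, t.2.1, t.2.2) with hp
    have hpq : ∀ t : X × Y × Z, q t ≤ p t := by
      rintro ⟨x, y, z⟩
      exact Finset.single_le_sum (f := fun x => q (x, y, z))
        (fun i _ => hq0 _) (Finset.mem_univ x)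
    set r : X × Y × Z → ℝ :=
      fun t => -(if q t = 0 then 0 else q t * Real.log (q t / p t)) with hr
    refine ⟨r, p, q, hY, hZ, fun t => rfl, ?_, ?_⟩
    · intro t
      by_cases h0 : q t = 0
      · right
        refine ⟨h0, ?_, ?_⟩
        · simp [hr, h0]
        · simp only
          rw [← h0]; exact hpq t
      · left
        have hqpos : 0 < q t := lt_of_le_of_ne (hq0 t) (Ne.symm h0)
        have hppos : 0 < p t := lt_of_lt_of_le hqpos (hpq t)
        refine ⟨hqpos, ?_⟩
        simp only [hr, if_neg h0]
        have : -(q t * Real.log (q t / p t)) / q t = Real.log (p t / q t) := by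
          rw [Real.log_div (ne_of_gt hqpos) (ne_of_gt hppos),
            Real.log_div (ne_of_gt hppos) (ne_of_gt hqpos)]
          field_simp
          ring
        rw [this, Real.exp_log (by positivity)]
        rw [mul_div_assoc'] -- q*(p/q) form
        rw [mul_comm, mul_div_assoc, div_self (ne_of_gt hqpos), mul_one]
      -- done Kexp
    · rw [hv, ← Finset.sum_neg_distrib]
      exact Finset.sum_congr rfl fun t _ => by simp [hr, hp]
  · -- every EXP value dominated by a CP value
    rintro v ⟨r, p, q, hY, hZ, hpdef, hK, hv⟩
    refine ⟨∑ t : X × Y × Z, if q t = 0 then 0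
        else q t * Real.log (q t / ∑ x : X, q (x, t.2.1, t.2.2)), ?_, ?_⟩
    · exact ⟨q, fun t => (kexp_bound (hK t)).2, hY, hZ, rfl⟩
    · rw [hv]
      calc (∑ t : X × Y × Z, if q t = 0 then 0
            else q t * Real.log (q t / ∑ x : X, q (x, t.2.1, t.2.2)))
          = ∑ t : X × Y × Z, if q t = 0 then 0 else q t * Real.log (q t / p t) := by
            exact Finset.sum_congr rfl fun t _ => by rw [hpdef t]
        _ ≤ -∑ t : X × Y × Z, r t := dom r p q hK
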